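/- Let Δ be a finite set with |Δ| ≥ 2, let m ≥ 2, and let G be a primitive rank 3 permutation group on Δ^m with G ≤ Sym(Δ) ↑ Sym(m) (so G preserves the nontrivial product decomposition Ω = Δ^m). Then m = 2 and G^(2) = Sym(Δ) ↑ Sym(2). -/

import Mathlib

/-- The rank of a permutation group `G ≤ Sym(Ω)`: the number of orbits of `G`
on `Ω × Ω` under the componentwise action (the number of 2-orbits). -/
noncomputable def permRank {Ω : Type*} (G : Subgroup (Equiv.Perm Ω)) : ℕ :=
  Nat.card (MulAction.orbitRel.Quotient G (Ω × Ω))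

/-- The 2-closure of a permutation group `G ≤ Sym(Ω)`: the subgroup of all
permutations mapping every 2-orbit of `G` onto itself. -/
def twoClosure {Ω : Type*} [Finite Ω] (G : Subgroup (Equiv.Perm Ω)) :
    Subgroup (Equiv.Perm Ω) where
  carrier := {f | ∀ p : Ω × Ω, (f p.1, f p.2) ∈ MulAction.orbit G p}
  one_mem' := fun p => MulAction.mem_orbit_self p
  mul_mem' := by
    intro f g hf hg p
    have h1 := hf (g p.1, g p.2)
    have h2 := hg p
    have : MulAction.orbit G ((g p.1, g p.2) : Ω × Ω) = MulAction.orbit G p :=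
      MulAction.orbit_eq_iff.2 h2
    rw [this] at h1
    exact h1
  inv_mem' := by
    intro f hf p
    classical
    have : Finite (MulAction.orbit G p) := Subtype.finite
    set s : MulAction.orbit G p → MulAction.orbit G p := fun x =>
      ⟨(f x.1.1, f x.1.2), by
        have h1 := hf x.1
        have : MulAction.orbit G (x.1 : Ω × Ω) = MulAction.orbit G p :=
          MulAction.orbit_eq_iff.2 x.2
        rw [this] at h1
        exact h1⟩ with hs
    have hinj : Function.Injective s := by
      intro a b hab
      have h1 : (f a.1.1, f a.1.2) = ((f b.1.1 : Ω), f b.1.2) := congrArg Subtype.val hab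
      have h2 : a.1.1 = b.1.1 := f.injective (congrArg Prod.fst h1)
      have h3 : a.1.2 = b.1.2 := f.injective (congrArg Prod.snd h1)
      exact Subtype.ext (Prod.ext h2 h3)
    have hsurj : Function.Surjective s := Finite.surjective_of_injective hinj
    obtain ⟨x, hx⟩ := hsurj ⟨p, MulAction.mem_orbit_self p⟩
    have h1 : ((f x.1.1 : Ω), f x.1.2) = p := congrArg Subtype.val hx
    have e1 : f⁻¹ p.1 = x.1.1 := by
      have h := congrArg Prod.fst h1
      rw [Equiv.Perm.inv_def]
      simpa using (congrArg f.symm h).symm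
    have e2 : f⁻¹ p.2 = x.1.2 := by
      have h := congrArg Prod.snd h1
      rw [Equiv.Perm.inv_def]
      simpa using (congrArg f.symm h).symm
    rw [e1, e2]
    exact x.2

/-- A permutation group `G ≤ Sym(Ω)` is primitive if it is transitive and
every block of `G` is trivial (a subsingleton or the whole domain), i.e. `G`
preserves no partition of `Ω` other than the partition into singletons and the
partition with a single part. -/
def IsPrimitivePerm {Ω : Type*} (G : Subgroup (Equiv.Perm Ω)) : Prop :=
  MulAction.IsPretransitive G Ω ∧
    ∀ B : Set Ω, MulAction.IsBlock G B → B.Subsingleton ∨ B = Set.univ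

/-- The wreath product `G ↑ Sym(m)` in product action, as a subgroup of
`Sym(Δ^m)`: all permutations of the form `v ↦ fun i => g i (v (σ⁻¹ i))` with
`σ ∈ Sym(m)` and `g i ∈ G` for each `i`. -/
def productWreath {Δ : Type*} (G : Subgroup (Equiv.Perm Δ)) (m : ℕ) :
    Subgroup (Equiv.Perm (Fin m → Δ)) where
  carrier := {f | ∃ (σ : Equiv.Perm (Fin m)) (g : Fin m → Equiv.Perm Δ),
    (∀ i, g i ∈ G) ∧ ∀ (v : Fin m → Δ) (i : Fin m), f v i = g i (v (σ⁻¹ i))}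
  one_mem' := ⟨1, fun _ => 1, fun _ => G.one_mem, fun _ _ => rfl⟩
  mul_mem' := by
    rintro f f' ⟨σ, g, hgG, hf⟩ ⟨σ', g', hgG', hf'⟩
    refine ⟨σ * σ', fun i => g i * g' (σ⁻¹ i), fun i => G.mul_mem (hgG i) (hgG' (σ⁻¹ i)),
      fun v i => ?_⟩
    have : (f * f') v = f (f' v) := rfl
    rw [this, hf (f' v) i, hf' v (σ⁻¹ i)]
    rfl
  inv_mem' := by
    rintro f ⟨σ, g, hgG, hf⟩
    refine ⟨σ⁻¹, fun i => (g (σ i))⁻¹, fun i => G.inv_mem (hgG (σ i)), fun v i => ?_⟩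
    have h2 : f⁻¹ v = fun j => (g (σ j))⁻¹ (v (σ j)) := by
      apply f.injective
      rw [Equiv.Perm.inv_def, Equiv.apply_symm_apply]
      funext j
      rw [hf]
      simp
    rw [h2]
    simp

namespace TCAux
open scoped Classical

variable {Δ : Type*}

/-- Hamming distance via `Nat.card` (no decidability needed). -/
noncomputable def dH {m : ℕ} (u v : Fin m → Δ) : ℕ := Nat.card {i : Fin m // u i ≠ v i}

lemma dH_eq_zero_iff {m : ℕ} {u v : Fin m → Δ} : dH u v = 0 ↔ u = v := by
  unfold dH
  rw [Nat.card_eq_zero]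
  constructor
  · rintro (h | h)
    · funext i; by_contra hi; exact h.false ⟨i, hi⟩
    · exact absurd h (by rw [not_infinite_iff_finite]; infer_instance)
  · rintro rfl; left; exact ⟨fun x => x.2 rfl⟩

lemma dH_pair {m k : ℕ} (hk : k ≤ m) {a b : Δ} (hab : a ≠ b) :
    dH (fun _ : Fin m => a) (fun i : Fin m => if (i : ℕ) < k then b else a) = k := by
  have key : ∀ i : Fin m, ((a ≠ if (i : ℕ) < k then b else a) ↔ (i : ℕ) < k) := by
    intro i
    by_cases h : (i : ℕ) < k <;> simp [h, hab]
  have e2 : {i : Fin m // (i : ℕ) < k} ≃ Fin k :=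
    { toFun := fun x => ⟨x.1, x.2⟩
      invFun := fun y => ⟨⟨y.1, lt_of_lt_of_le y.2 hk⟩, y.2⟩
      left_inv := fun x => rfl
      right_inv := fun y => rfl }
  unfold dH
  rw [Nat.card_congr ((Equiv.subtypeEquivRight key).trans e2), Nat.card_eq_fintype_card,
    Fintype.card_fin]

lemma dH_le {m : ℕ} (u v : Fin m → Δ) : dH u v ≤ m := by
  calc dH u v ≤ Nat.card (Fin m) :=
        Nat.card_le_card_of_injective Subtype.val Subtype.val_injective
    _ = m := by simp

lemma dH_invariant {m : ℕ} {f : Equiv.Perm (Fin m → Δ)}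
    (hf : f ∈ productWreath (⊤ : Subgroup (Equiv.Perm Δ)) m) (u v : Fin m → Δ) :
    dH (f u) (f v) = dH u v := by
  obtain ⟨σ, g, -, hfe⟩ := hf
  have key : ∀ i : Fin m, (u i ≠ v i) ↔ (f u (σ i) ≠ f v (σ i)) := by
    intro i
    rw [hfe, hfe, Equiv.Perm.inv_def, Equiv.symm_apply_apply]
    exact (Equiv.injective _).ne_iff.symm
  exact (Nat.card_congr (Equiv.subtypeEquiv σ key)).symm

lemma rank_ge {m : ℕ} [Fintype Δ] (hΔ : 2 ≤ Fintype.card Δ)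
    (G : Subgroup (Equiv.Perm (Fin m → Δ)))
    (hGW : G ≤ productWreath (⊤ : Subgroup (Equiv.Perm Δ)) m) :
    m + 1 ≤ permRank G := by
  classical
  obtain ⟨a, b, hab⟩ := Fintype.exists_pair_of_one_lt_card hΔ
  letI : Setoid ((Fin m → Δ) × (Fin m → Δ)) := MulAction.orbitRel G _
  set φ : Fin (m + 1) → MulAction.orbitRel.Quotient G ((Fin m → Δ) × (Fin m → Δ)) :=
    fun k => Quotient.mk'' ((fun _ : Fin m => a), (fun i : Fin m => if (i : ℕ) < (k : ℕ) then b else a)) with hφ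
  have hinj : Function.Injective φ := by
    intro k k' h
    have hrel : (MulAction.orbitRel G ((Fin m → Δ) × (Fin m → Δ)))
        ((fun _ => a), (fun i : Fin m => if (i : ℕ) < (k : ℕ) then b else a))
        ((fun _ => a), (fun i : Fin m => if (i : ℕ) < (k' : ℕ) then b else a)) :=
      Quotient.eq''.mp h
    rw [MulAction.orbitRel_apply] at hrel
    obtain ⟨g, hg⟩ := hrel
    have h1 : (g : Equiv.Perm (Fin m → Δ)) (fun _ : Fin m => a) = (fun _ : Fin m => a) :=
      congrArg Prod.fst hg
    have h2 : (g : Equiv.Perm (Fin m → Δ)) (fun i : Fin m => if (i : ℕ) < (k' : ℕ) then b else a)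
        = (fun i : Fin m => if (i : ℕ) < (k : ℕ) then b else a) := congrArg Prod.snd hg
    have := dH_invariant (hGW g.2) (fun _ : Fin m => a)
      (fun i : Fin m => if (i : ℕ) < (k' : ℕ) then b else a)
    rw [h1, h2, dH_pair (Nat.lt_succ_iff.mp k.2) hab, dH_pair (Nat.lt_succ_iff.mp k'.2) hab]
      at this
    exact Fin.ext this
  calc m + 1 = Nat.card (Fin (m + 1)) := by simp
    _ ≤ _ := Nat.card_le_card_of_injective φ hinj


lemma fin2_cases (i : Fin 2) : i = 0 ∨ i = 1 := by omega

lemma eq_iff_fin2 {u v : Fin 2 → Δ} : u = v ↔ u 0 = v 0 ∧ u 1 = v 1 := by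
  constructor
  · rintro rfl; exact ⟨rfl, rfl⟩
  · rintro ⟨h0, h1⟩
    funext i
    rcases fin2_cases i with rfl | rfl <;> assumption

lemma card_subtype_fin2 (P : Fin 2 → Prop) :
    Nat.card {i : Fin 2 // P i} =
      (if P 0 then 1 else 0) + (if P 1 then 1 else 0) := by
  classical
  by_cases h0 : P 0 <;> by_cases h1 : P 1 <;> simp only [h0, h1, if_true, if_false]
  · have hall : ∀ i : Fin 2, P i := by
      intro i; rcases fin2_cases i with rfl | rfl <;> assumption
    rw [Nat.card_congr (Equiv.subtypeUnivEquiv hall)]; simp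
  · haveI : Unique {i : Fin 2 // P i} :=
      { default := ⟨0, h0⟩
        uniq := fun x => by
          rcases fin2_cases x.1 with h | h
          · exact Subtype.ext h
          · exact absurd (h ▸ x.2) h1 }
    exact Nat.card_unique
  · haveI : Unique {i : Fin 2 // P i} :=
      { default := ⟨1, h1⟩
        uniq := fun x => by
          rcases fin2_cases x.1 with h | h
          · exact absurd (h ▸ x.2) h0
          · exact Subtype.ext h }
    exact Nat.card_unique
  · haveI : IsEmpty {i : Fin 2 // P i} :=
      ⟨fun x => by rcases fin2_cases x.1 with h | h
                   · exact h0 (h ▸ x.2)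
                   · exact h1 (h ▸ x.2)⟩
    exact Nat.card_of_isEmpty

lemma dH_fin2 (u v : Fin 2 → Δ) :
    dH u v = (if u 0 = v 0 then 0 else 1) + (if u 1 = v 1 then 0 else 1) := by
  classical
  rw [dH, card_subtype_fin2 (fun i => u i ≠ v i)]
  by_cases h0 : u 0 = v 0 <;> by_cases h1 : u 1 = v 1 <;> simp [h0, h1]

lemma dH_eq_one_iff {u v : Fin 2 → Δ} :
    dH u v = 1 ↔ (u 0 = v 0 ∧ u 1 ≠ v 1) ∨ (u 0 ≠ v 0 ∧ u 1 = v 1) := by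
  classical
  rw [dH_fin2]
  by_cases h0 : u 0 = v 0 <;> by_cases h1 : u 1 = v 1 <;> simp [h0, h1]

lemma dH_eq_two_iff {u v : Fin 2 → Δ} :
    dH u v = 2 ↔ u 0 ≠ v 0 ∧ u 1 ≠ v 1 := by
  classical
  rw [dH_fin2]
  by_cases h0 : u 0 = v 0 <;> by_cases h1 : u 1 = v 1 <;> simp [h0, h1]


section Rook

/-- The coordinate-swapping permutation of `Fin 2 → Δ`. -/
def sw : Equiv.Perm (Fin 2 → Δ) :=
  Equiv.arrowCongr (Equiv.swap 0 1) (Equiv.refl Δ)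

lemma sw_apply (u : Fin 2 → Δ) (i : Fin 2) : sw u i = u (Equiv.swap 0 1 i) := by
  simp [sw, Equiv.arrowCongr_apply, Equiv.symm_swap]

lemma sw_apply_zero (u : Fin 2 → Δ) : sw u 0 = u 1 := by
  rw [sw_apply, Equiv.swap_apply_left]

lemma sw_apply_one (u : Fin 2 → Δ) : sw u 1 = u 0 := by
  rw [sw_apply, Equiv.swap_apply_right]

lemma sw_sw (u : Fin 2 → Δ) : sw (sw u) = u := by
  funext i
  rcases fin2_cases i with rfl | rfl
  · rw [sw_apply_zero, sw_apply_one]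
  · rw [sw_apply_one, sw_apply_zero]

lemma dH_sw (u v : Fin 2 → Δ) : dH (sw u) (sw v) = dH u v := by
  unfold dH
  refine Nat.card_congr (Equiv.subtypeEquiv (Equiv.swap 0 1) fun i => ?_)
  rw [sw_apply, sw_apply]

lemma edge_dichot (f : Equiv.Perm (Fin 2 → Δ)) (hf : ∀ u v, dH (f u) (f v) = dH u v)
    {u v : Fin 2 → Δ}
    (h : (u 0 = v 0 ∧ u 1 ≠ v 1) ∨ (u 0 ≠ v 0 ∧ u 1 = v 1)) :
    (f u 0 = f v 0 ∧ f u 1 ≠ f v 1) ∨ (f u 0 ≠ f v 0 ∧ f u 1 = f v 1) := by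
  have : dH (f u) (f v) = 1 := by rw [hf]; exact dH_eq_one_iff.mpr h
  exact dH_eq_one_iff.mp this

lemma opp_pres (f : Equiv.Perm (Fin 2 → Δ)) (hf : ∀ u v, dH (f u) (f v) = dH u v)
    {u v : Fin 2 → Δ} (h0 : u 0 ≠ v 0) (h1 : u 1 ≠ v 1) :
    f u 0 ≠ f v 0 ∧ f u 1 ≠ f v 1 := by
  have : dH (f u) (f v) = 2 := by rw [hf]; exact dH_eq_two_iff.mpr ⟨h0, h1⟩
  exact dH_eq_two_iff.mp this

/-- Row triple consistency. -/
lemma rowTriple (f : Equiv.Perm (Fin 2 → Δ)) (hf : ∀ u v, dH (f u) (f v) = dH u v)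
    {u v w : Fin 2 → Δ} (huv0 : u 0 = v 0) (huw0 : u 0 = w 0)
    (huv1 : u 1 ≠ v 1) (huw1 : u 1 ≠ w 1) (hvw1 : v 1 ≠ w 1)
    (hP : f u 0 = f v 0) : f u 0 = f w 0 := by
  by_contra hngoal
  rcases edge_dichot f hf (u := u) (v := w) (Or.inl ⟨huw0, huw1⟩) with ⟨h, -⟩ | ⟨-, hQuw⟩
  · exact hngoal h
  rcases edge_dichot f hf (u := u) (v := v) (Or.inl ⟨huv0, huv1⟩) with ⟨-, hnQuv⟩ | ⟨hnPuv, -⟩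
  · rcases edge_dichot f hf (u := v) (v := w)
        (Or.inl ⟨huv0 ▸ huw0, hvw1⟩) with ⟨hPvw, -⟩ | ⟨-, hQvw⟩
    · exact hngoal (hP.trans hPvw)
    · exact hnQuv (hQuw.trans hQvw.symm)
  · exact hnPuv hP

lemma conj_dist (f : Equiv.Perm (Fin 2 → Δ)) (hf : ∀ u v, dH (f u) (f v) = dH u v) :
    ∀ u v, dH (((sw * f * sw : Equiv.Perm (Fin 2 → Δ))) u) (((sw * f * sw : Equiv.Perm (Fin 2 → Δ))) v) = dH u v := by
  intro u v
  simp only [Equiv.Perm.mul_apply, dH_sw, hf]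

lemma conj_ev (f : Equiv.Perm (Fin 2 → Δ)) (z : Fin 2 → Δ) :
    ((sw * f * sw : Equiv.Perm (Fin 2 → Δ))) (sw z) 0 = f z 1 := by
  simp only [Equiv.Perm.mul_apply, sw_sw, sw_apply_zero]

/-- Column triple consistency (mirror of `rowTriple`). -/
lemma colTriple (f : Equiv.Perm (Fin 2 → Δ)) (hf : ∀ u v, dH (f u) (f v) = dH u v)
    {u v w : Fin 2 → Δ} (huv1 : u 1 = v 1) (huw1 : u 1 = w 1)
    (huv0 : u 0 ≠ v 0) (huw0 : u 0 ≠ w 0) (hvw0 : v 0 ≠ w 0)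
    (hQ : f u 1 = f v 1) : f u 1 = f w 1 := by
  have h := rowTriple ((sw * f * sw : Equiv.Perm (Fin 2 → Δ))) (conj_dist f hf) (u := sw u) (v := sw v) (w := sw w)
    (by rw [sw_apply_zero, sw_apply_zero]; exact huv1)
    (by rw [sw_apply_zero, sw_apply_zero]; exact huw1)
    (by rw [sw_apply_one, sw_apply_one]; exact huv0)
    (by rw [sw_apply_one, sw_apply_one]; exact huw0)
    (by rw [sw_apply_one, sw_apply_one]; exact hvw0)
    (by rw [conj_ev, conj_ev]; exact hQ)
  rw [conj_ev, conj_ev] at h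
  exact h

/-- Row pair of type P forces adjacent column pair to be of type Q. -/
lemma rowToCol (f : Equiv.Perm (Fin 2 → Δ)) (hf : ∀ u v, dH (f u) (f v) = dH u v)
    {u v w : Fin 2 → Δ} (huv0 : u 0 = v 0) (huv1 : u 1 ≠ v 1)
    (huw0 : u 0 ≠ w 0) (huw1 : u 1 = w 1)
    (hP : f u 0 = f v 0) : f u 1 = f w 1 := by
  rcases edge_dichot f hf (u := u) (v := w) (Or.inr ⟨huw0, huw1⟩) with ⟨hPuw, -⟩ | ⟨-, h⟩
  · have hopp := opp_pres f hf (u := v) (v := w)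
      (by rw [← huv0]; exact huw0) (by rw [← huw1]; exact fun hc => huv1 hc.symm)
    exact absurd (hP.symm.trans hPuw) hopp.1
  · exact h

/-- Column pair of type Q forces adjacent row pair to be of type P. -/
lemma colToRow (f : Equiv.Perm (Fin 2 → Δ)) (hf : ∀ u v, dH (f u) (f v) = dH u v)
    {u v w : Fin 2 → Δ} (huv1 : u 1 = v 1) (huv0 : u 0 ≠ v 0)
    (huw1 : u 1 ≠ w 1) (huw0 : u 0 = w 0)
    (hQ : f u 1 = f v 1) : f u 0 = f w 0 := by
  have h := rowToCol ((sw * f * sw : Equiv.Perm (Fin 2 → Δ))) (conj_dist f hf)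
    (u := sw u) (v := sw v) (w := sw w)
    (by rw [sw_apply_zero, sw_apply_zero]; exact huv1)
    (by rw [sw_apply_one, sw_apply_one]; exact huv0)
    (by rw [sw_apply_zero, sw_apply_zero]; exact huw1)
    (by rw [sw_apply_one, sw_apply_one]; exact huw0)
    (by rw [conj_ev, conj_ev]; exact hQ)
  have conj_ev1 : ∀ z : Fin 2 → Δ, ((sw * f * sw : Equiv.Perm (Fin 2 → Δ))) (sw z) 1 = f z 0 := by
    intro z
    simp only [Equiv.Perm.mul_apply, sw_sw, sw_apply_one]
  rw [conj_ev1, conj_ev1] at h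
  exact h

/-- Starting from a type-P row pair at `u`, every row pair at `u` is type P. -/
lemma rowStar (f : Equiv.Perm (Fin 2 → Δ)) (hf : ∀ u v, dH (f u) (f v) = dH u v)
    {u v w : Fin 2 → Δ} (huv0 : u 0 = v 0) (huv1 : u 1 ≠ v 1)
    (hw0 : w 0 = u 0) (hw1 : w 1 ≠ u 1)
    (hP : f u 0 = f v 0) : f u 0 = f w 0 := by
  by_cases hwv : w 1 = v 1
  · have : w = v := eq_iff_fin2.mpr ⟨hw0.trans huv0, hwv⟩
    rw [this]; exact hP
  · exact rowTriple f hf huv0 hw0.symm huv1 (fun hc => hw1 hc.symm)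
      (fun hc => hwv hc.symm) hP

/-- All row pairs in the same row have the same type. -/
lemma rowPairsAgree (f : Equiv.Perm (Fin 2 → Δ)) (hf : ∀ u v, dH (f u) (f v) = dH u v)
    {u v u' v' : Fin 2 → Δ} (huv0 : u 0 = v 0) (h1 : v 0 = u' 0) (h2 : u' 0 = v' 0)
    (huv1 : u 1 ≠ v 1) (h3 : u' 1 ≠ v' 1)
    (hP : f u 0 = f v 0) : f u' 0 = f v' 0 := by
  by_cases hu'u : u' 1 = u 1
  · have : u' = u := eq_iff_fin2.mpr ⟨(h1.symm.trans huv0.symm), hu'u⟩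
    rw [this]
    exact rowStar f hf huv0 huv1 (h2.symm.trans (h1.symm.trans huv0.symm))
      (fun hc => h3 (hu'u.trans hc.symm)) hP
  · have hPuu' : f u 0 = f u' 0 :=
      rowStar f hf huv0 huv1 (h1.symm.trans huv0.symm) hu'u hP
    exact rowStar f hf (u := u') (v := u) (w := v')
      (h1.symm.trans huv0.symm) hu'u h2.symm
      (fun hc => h3 hc.symm) hPuu'.symm

/-- All column pairs in the same column have the same type. -/
lemma colPairsAgree (f : Equiv.Perm (Fin 2 → Δ)) (hf : ∀ u v, dH (f u) (f v) = dH u v)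
    {u v u' v' : Fin 2 → Δ} (huv1 : u 1 = v 1) (h1 : v 1 = u' 1) (h2 : u' 1 = v' 1)
    (huv0 : u 0 ≠ v 0) (h3 : u' 0 ≠ v' 0)
    (hQ : f u 1 = f v 1) : f u' 1 = f v' 1 := by
  have h := rowPairsAgree ((sw * f * sw : Equiv.Perm (Fin 2 → Δ))) (conj_dist f hf)
    (u := sw u) (v := sw v) (u' := sw u') (v' := sw v')
    (by rw [sw_apply_zero, sw_apply_zero]; exact huv1)
    (by rw [sw_apply_zero, sw_apply_zero]; exact h1)
    (by rw [sw_apply_zero, sw_apply_zero]; exact h2)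
    (by rw [sw_apply_one, sw_apply_one]; exact huv0)
    (by rw [sw_apply_one, sw_apply_one]; exact h3)
    (by rw [conj_ev, conj_ev]; exact hQ)
  rw [conj_ev, conj_ev] at h
  exact h

/-- Shorthand for points of the grid. -/
def pt (x y : Δ) : Fin 2 → Δ := ![x, y]

@[simp] lemma pt0 (x y : Δ) : pt x y 0 = x := by simp [pt]
@[simp] lemma pt1 (x y : Δ) : pt x y 1 = y := by simp [pt]

/-- The key global consistency lemma, "row-type" case. -/
lemma wd (f : Equiv.Perm (Fin 2 → Δ)) (hf : ∀ u v, dH (f u) (f v) = dH u v)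
    {a b : Δ} (hab : a ≠ b) (base : f (pt a a) 0 = f (pt a b) 0) :
    (∀ u v, u 0 = v 0 → f u 0 = f v 0) ∧ (∀ u v, u 1 = v 1 → f u 1 = f v 1) := by
  have wd0 : ∀ u v, u 0 = v 0 → f u 0 = f v 0 := by
    intro u v h0
    by_cases h1 : u 1 = v 1
    · rw [eq_iff_fin2.mpr ⟨h0, h1⟩]
    · by_cases hua : u 0 = a
      · exact rowPairsAgree f hf (u := pt a a) (v := pt a b) (u' := u) (v' := v)
          (by simp) (by simp [hua.symm]) h0 (by simpa using hab) h1 base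
      · have hQ : f (pt a a) 1 = f (pt (u 0) a) 1 :=
          rowToCol f hf (u := pt a a) (v := pt a b) (w := pt (u 0) a)
            (by simp) (by simpa using hab) (by simpa using fun hc => hua hc.symm) (by simp) base
        have hP : f (pt (u 0) a) 0 = f (pt (u 0) b) 0 :=
          colToRow f hf (u := pt (u 0) a) (v := pt a a) (w := pt (u 0) b)
            (by simp) (by simpa using hua) (by simpa using hab) (by simp) hQ.symm
        exact rowPairsAgree f hf (u := pt (u 0) a) (v := pt (u 0) b) (u' := u) (v' := v)
          (by simp) (by simp) h0 (by simpa using hab) h1 hP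
  have wd1 : ∀ u v, u 1 = v 1 → f u 1 = f v 1 := by
    intro u v h1
    by_cases h0 : u 0 = v 0
    · rw [eq_iff_fin2.mpr ⟨h0, h1⟩]
    · have hQ0 : f (pt a a) 1 = f (pt b a) 1 :=
        rowToCol f hf (u := pt a a) (v := pt a b) (w := pt b a)
          (by simp) (by simpa using hab) (by simpa using hab) (by simp) base
      by_cases hua : u 1 = a
      · exact colPairsAgree f hf (u := pt a a) (v := pt b a) (u' := u) (v' := v)
          (by simp) (by simp [hua.symm]) h1 (by simpa using hab) h0 hQ0
      · have hPr : f (pt a a) 0 = f (pt a (u 1)) 0 := wd0 _ _ (by simp)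
        have hQrs : f (pt a (u 1)) 1 = f (pt b (u 1)) 1 :=
          rowToCol f hf (u := pt a (u 1)) (v := pt a a) (w := pt b (u 1))
            (by simp) (by simpa using fun hc => hua hc) (by simpa using hab) (by simp) hPr.symm
        exact colPairsAgree f hf (u := pt a (u 1)) (v := pt b (u 1)) (u' := u) (v' := v)
          (by simp) (by simp) h1 (by simpa using hab) h0 hQrs
  exact ⟨wd0, wd1⟩

/-- The global dichotomy for a Hamming-distance preserving permutation of `Δ²`. -/
lemma main_dichotomy (hcard : ∃ a b : Δ, a ≠ b)
    (f : Equiv.Perm (Fin 2 → Δ)) (hf : ∀ u v, dH (f u) (f v) = dH u v) :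
    ((∀ u v, u 0 = v 0 → f u 0 = f v 0) ∧ (∀ u v, u 1 = v 1 → f u 1 = f v 1)) ∨
    ((∀ u v, u 0 = v 0 → f u 1 = f v 1) ∧ (∀ u v, u 1 = v 1 → f u 0 = f v 0)) := by
  obtain ⟨a, b, hab⟩ := hcard
  rcases edge_dichot f hf (u := pt a a) (v := pt a b)
      (Or.inl ⟨by simp, by simpa using hab⟩) with ⟨hP, -⟩ | ⟨-, hQ⟩
  · exact Or.inl (wd f hf hab hP)
  · have hf' : ∀ u v, dH ((sw * f : Equiv.Perm (Fin 2 → Δ)) u)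
        ((sw * f : Equiv.Perm (Fin 2 → Δ)) v) = dH u v := fun u v => by
      simp only [Equiv.Perm.mul_apply, dH_sw, hf]
    have base' : (sw * f : Equiv.Perm (Fin 2 → Δ)) (pt a a) 0
        = (sw * f : Equiv.Perm (Fin 2 → Δ)) (pt a b) 0 := by
      simp only [Equiv.Perm.mul_apply, sw_apply_zero]
      exact hQ
    obtain ⟨w0, w1⟩ := wd ((sw * f : Equiv.Perm (Fin 2 → Δ))) hf' hab base'
    refine Or.inr ⟨fun u v h => ?_, fun u v h => ?_⟩
    · simpa only [Equiv.Perm.mul_apply, sw_apply_zero] using w0 u v h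
    · simpa only [Equiv.Perm.mul_apply, sw_apply_one] using w1 u v h

lemma mem_left [Fintype Δ] (f : Equiv.Perm (Fin 2 → Δ)) (c : Δ)
    (h0 : ∀ u v, u 0 = v 0 → f u 0 = f v 0) (h1 : ∀ u v, u 1 = v 1 → f u 1 = f v 1) :
    f ∈ productWreath (⊤ : Subgroup (Equiv.Perm Δ)) 2 := by
  set A : Δ → Δ := fun x => f (pt x c) 0 with hAdef
  set B : Δ → Δ := fun y => f (pt c y) 1 with hBdef
  have hA : ∀ u, f u 0 = A (u 0) := fun u => h0 u (pt (u 0) c) (by simp)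
  have hB : ∀ u, f u 1 = B (u 1) := fun u => h1 u (pt c (u 1)) (by simp)
  have hAinj : Function.Injective A := by
    intro x y hxy
    have hc1 : f (pt x c) 1 = f (pt y c) 1 := h1 _ _ (by simp)
    have : f (pt x c) = f (pt y c) := eq_iff_fin2.mpr ⟨hxy, hc1⟩
    have := f.injective this
    simpa using congrFun this 0
  have hBinj : Function.Injective B := by
    intro x y hxy
    have hc0 : f (pt c x) 0 = f (pt c y) 0 := h0 _ _ (by simp)
    have : f (pt c x) = f (pt c y) := eq_iff_fin2.mpr ⟨hc0, hxy⟩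
    have := f.injective this
    simpa using congrFun this 1
  have hAbij : Function.Bijective A := ⟨hAinj, Finite.surjective_of_injective hAinj⟩
  have hBbij : Function.Bijective B := ⟨hBinj, Finite.surjective_of_injective hBinj⟩
  refine ⟨1, ![Equiv.ofBijective A hAbij, Equiv.ofBijective B hBbij],
    fun i => Subgroup.mem_top _, fun v i => ?_⟩
  rcases fin2_cases i with rfl | rfl
  · simp only [inv_one, Equiv.Perm.one_apply, Matrix.cons_val_zero]
    exact hA v
  · simp only [inv_one, Equiv.Perm.one_apply, Matrix.cons_val_one, Matrix.head_cons]
    exact hB v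

lemma mem_right [Fintype Δ] (f : Equiv.Perm (Fin 2 → Δ)) (c : Δ)
    (h0 : ∀ u v, u 0 = v 0 → f u 1 = f v 1) (h1 : ∀ u v, u 1 = v 1 → f u 0 = f v 0) :
    f ∈ productWreath (⊤ : Subgroup (Equiv.Perm Δ)) 2 := by
  set A : Δ → Δ := fun x => f (pt x c) 1 with hAdef
  set B : Δ → Δ := fun y => f (pt c y) 0 with hBdef
  have hA : ∀ u, f u 1 = A (u 0) := fun u => h0 u (pt (u 0) c) (by simp)
  have hB : ∀ u, f u 0 = B (u 1) := fun u => h1 u (pt c (u 1)) (by simp)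
  have hAinj : Function.Injective A := by
    intro x y hxy
    have hc1 : f (pt x c) 0 = f (pt y c) 0 := h1 _ _ (by simp)
    have : f (pt x c) = f (pt y c) := eq_iff_fin2.mpr ⟨hc1, hxy⟩
    have := f.injective this
    simpa using congrFun this 0
  have hBinj : Function.Injective B := by
    intro x y hxy
    have hc0 : f (pt c x) 1 = f (pt c y) 1 := h0 _ _ (by simp)
    have : f (pt c x) = f (pt c y) := eq_iff_fin2.mpr ⟨hxy, hc0⟩
    have := f.injective this
    simpa using congrFun this 1
  have hAbij : Function.Bijective A := ⟨hAinj, Finite.surjective_of_injective hAinj⟩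
  have hBbij : Function.Bijective B := ⟨hBinj, Finite.surjective_of_injective hBinj⟩
  refine ⟨Equiv.swap 0 1, ![Equiv.ofBijective B hBbij, Equiv.ofBijective A hAbij],
    fun i => Subgroup.mem_top _, fun v i => ?_⟩
  rcases fin2_cases i with rfl | rfl
  · simp only [Equiv.swap_inv, Equiv.swap_apply_left, Matrix.cons_val_zero]
    exact hB v
  · simp only [Equiv.swap_inv, Equiv.swap_apply_right, Matrix.cons_val_one, Matrix.head_cons]
    exact hA v

lemma orbit_iff_dH [Fintype Δ] (hΔ : 2 ≤ Fintype.card Δ)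
    (G : Subgroup (Equiv.Perm (Fin 2 → Δ)))
    (hGW : G ≤ productWreath (⊤ : Subgroup (Equiv.Perm Δ)) 2) (hrank : permRank G = 3) :
    ∀ p q : (Fin 2 → Δ) × (Fin 2 → Δ),
      p ∈ MulAction.orbit G q ↔ dH p.1 p.2 = dH q.1 q.2 := by
  classical
  obtain ⟨a, b, hab⟩ := Fintype.exists_pair_of_one_lt_card hΔ
  letI : Setoid ((Fin 2 → Δ) × (Fin 2 → Δ)) := MulAction.orbitRel G _
  have hfor : ∀ p q : (Fin 2 → Δ) × (Fin 2 → Δ),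
      p ∈ MulAction.orbit G q → dH p.1 p.2 = dH q.1 q.2 := by
    rintro p q ⟨g, hg⟩
    rw [← hg]
    exact dH_invariant (hGW g.2) q.1 q.2
  set DQ : MulAction.orbitRel.Quotient G ((Fin 2 → Δ) × (Fin 2 → Δ)) → Fin 3 :=
    Quotient.lift
      (fun p : (Fin 2 → Δ) × (Fin 2 → Δ) =>
        (⟨dH p.1 p.2, lt_of_le_of_lt (dH_le _ _) (by norm_num)⟩ : Fin 3))
      (fun p q h => Fin.ext (hfor p q (MulAction.orbitRel_apply.mp h))) with hDQ
  have hsurj : Function.Surjective DQ := by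
    intro j
    refine ⟨Quotient.mk''
      ((fun _ : Fin 2 => a), (fun i : Fin 2 => if (i : ℕ) < (j : ℕ) then b else a)), ?_⟩
    exact Fin.ext (dH_pair (Nat.lt_succ_iff.mp j.2) hab)
  have e : MulAction.orbitRel.Quotient G ((Fin 2 → Δ) × (Fin 2 → Δ)) ≃ Fin 3 :=
    Finite.equivFinOfCardEq hrank
  have hinj : Function.Injective DQ :=
    (Finite.injective_iff_surjective_of_equiv e).mpr hsurj
  intro p q
  refine ⟨hfor p q, fun h => ?_⟩
  have h1 : DQ (Quotient.mk'' p) = DQ (Quotient.mk'' q) := Fin.ext h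
  exact MulAction.orbitRel_apply.mp (Quotient.eq''.mp (hinj h1))

end Rook
end TCAux

/-- If `G` is a primitive rank 3 group on `Δ^m` (`|Δ| ≥ 2`,
`m ≥ 2`) contained in `Sym(Δ) ↑ Sym(m)`, then `m = 2` and the 2-closure of `G`
is `Sym(Δ) ↑ Sym(2)`. -/
theorem twoClosure_of_product_decomposition {Δ : Type*} [Fintype Δ]
    (hΔ : 2 ≤ Fintype.card Δ) (m : ℕ) (hm : 2 ≤ m)
    (G : Subgroup (Equiv.Perm (Fin m → Δ)))
    (hGW : G ≤ productWreath (⊤ : Subgroup (Equiv.Perm Δ)) m)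
    (hprim : IsPrimitivePerm G) (hrank : permRank G = 3) :
    m = 2 ∧ twoClosure G = productWreath (⊤ : Subgroup (Equiv.Perm Δ)) m := by
  classical
  have hm2 : m = 2 := by
    have := TCAux.rank_ge hΔ G hGW
    omega
  subst hm2
  obtain ⟨a, b, hab⟩ := Fintype.exists_pair_of_one_lt_card hΔ
  have horb := TCAux.orbit_iff_dH hΔ G hGW hrank
  refine ⟨rfl, le_antisymm ?_ ?_⟩
  · intro f hfC
    have hfC' : ∀ p : (Fin 2 → Δ) × (Fin 2 → Δ),
        (f p.1, f p.2) ∈ MulAction.orbit G p := hfC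
    have hfd : ∀ u v, TCAux.dH (f u) (f v) = TCAux.dH u v := fun u v =>
      (horb (f u, f v) (u, v)).mp (hfC' (u, v))
    rcases TCAux.main_dichotomy ⟨a, b, hab⟩ f hfd with ⟨h0, h1⟩ | ⟨h0, h1⟩
    · exact TCAux.mem_left f a h0 h1
    · exact TCAux.mem_right f a h0 h1
  · intro f hfW
    have : ∀ p : (Fin 2 → Δ) × (Fin 2 → Δ), (f p.1, f p.2) ∈ MulAction.orbit G p :=
      fun p => (horb (f p.1, f p.2) p).mpr (TCAux.dH_invariant hfW p.1 p.2)
    exact this
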